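/- Let $A \in V_0 \otimes \cdots \otimes V_p$ be a multidimensional matrix, viewed as a linear map $A: V_1^\vee \otimes \cdots \otimes V_p^\vee \to V_0$. If for the induced map $\partial_A : V_0^\vee \otimes S^{m_1}V_1 \otimes \cdots \otimes S^{m_p}V_p \to S^{m_1+1}V_1 \otimes \cdots \otimes S^{m_p+1}V_p$ there exist nonzero $v_i \in V_i^\vee$ ($i=1,\dots,p$) with $A(v_1 \otimes \cdots \otimes v_p) = 0$, then the transpose $(\partial_A)^t$ kills the nonzero vector $v_1^{\otimes m_1+1} \otimes \cdots \otimes v_p^{\otimes m_p+1}$; hence if $A$ is degenerate then $\det \partial_A = 0$. -/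

import Mathlib

open scoped BigOperators Classical

/-- The matrix of the map
`∂_A : V₀^∨ ⊗ S^{m₁}V₁ ⊗ ⋯ ⊗ S^{m_p}V_p → S^{m₁+1}V₁ ⊗ ⋯ ⊗ S^{m_p+1}V_p`
in the monomial bases (bases of symmetric powers of `ℂ^{n i}` are indexed by
`Sym (Fin (n i)) m`): `∂_A(ε_{i₀} ⊗ x^c) = ∑_j a_{i₀ j} x^{c + e_j}`, i.e. multiply by
the image of `ε_{i₀}` under `Aᵗ : V₀^∨ → V₁ ⊗ ⋯ ⊗ V_p` using symmetric multiplication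
in each factor. -/
noncomputable def delM {n₀ : ℕ} {ι : Type} [Fintype ι]
    (n : ι → ℕ) (m : ι → ℕ) (a : Fin n₀ → ((i : ι) → Fin (n i)) → ℂ) :
    Matrix ((i : ι) → Sym (Fin (n i)) (m i + 1))
      (Fin n₀ × ((i : ι) → Sym (Fin (n i)) (m i))) ℂ :=
  fun d x => ∑ j : (i : ι) → Fin (n i),
    if (∀ i, d i = j i ::ₛ x.2 i) then a x.1 j else 0

set_option maxHeartbeats 1000000 in
/-- boundary format, `m_j = ∑_{i<j} kᵢ`.  If there are nonzero
`vᵢ ∈ Vᵢ^∨` with `A(v₁ ⊗ ⋯ ⊗ v_p) = 0`, then the transpose of `∂_A` kills the nonzero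
vector `v₁^{⊗ m₁+1} ⊗ ⋯ ⊗ v_p^{⊗ m_p+1}` (whose coordinate at a monomial basis vector
`d` is `∏ᵢ ∏_{r ∈ dᵢ} vᵢ(r)`); hence `det ∂_A = 0` (the determinant being computed
after identifying source and target by any linear identification of the bases). -/
theorem stmt_2 (p : ℕ) (hp : 1 ≤ p) (k : ℕ → ℕ)
    (hk : k 0 = ∑ i ∈ Finset.range p, k (i + 1))
    (n : Fin p → ℕ) (hn : ∀ i : Fin p, n i = k (i.val + 1) + 1)
    (m : Fin p → ℕ) (hm : ∀ i : Fin p, m i = ∑ i' ∈ Finset.range i.val, k (i' + 1))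
    (a : Fin (k 0 + 1) → ((i : Fin p) → Fin (n i)) → ℂ)
    (v : (i : Fin p) → Fin (n i) → ℂ) (hv : ∀ i, v i ≠ 0)
    (hker : ∀ i₀ : Fin (k 0 + 1),
      ∑ j : (i : Fin p) → Fin (n i), a i₀ j * ∏ i, v i (j i) = 0)
    (u : ((i : Fin p) → Sym (Fin (n i)) (m i + 1)) → ℂ)
    (hu : u = fun d => ∏ i, ((d i).1.map (v i)).prod) :
    u ≠ 0 ∧
    (delM n m a).transpose.mulVec u = 0 ∧
    ∀ e : (Fin (k 0 + 1) × ((i : Fin p) → Sym (Fin (n i)) (m i))) ≃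
        ((i : Fin p) → Sym (Fin (n i)) (m i + 1)),
      ((delM n m a).submatrix e id).det = 0 := by
  -- nonzeroness of u
  have hu0 : u ≠ 0 := by
    choose j hj using fun i => Function.ne_iff.mp (hv i)
    intro h
    have := congrFun h (fun i => Sym.replicate (m i + 1) (j i))
    rw [hu] at this
    simp only [Sym.replicate, Multiset.map_replicate, Multiset.prod_replicate,
      Pi.zero_apply] at this
    rcases Finset.prod_eq_zero_iff.mp this with ⟨i, -, hi⟩
    exact hj i (pow_eq_zero_iff (Nat.succ_ne_zero _) |>.mp hi)
  -- kernel
  have hker' : (delM n m a).transpose.mulVec u = 0 := by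
    funext x
    obtain ⟨i₀, c⟩ := x
    simp only [Matrix.mulVec, Matrix.transpose_apply, dotProduct, delM,
      Pi.zero_apply]
    have step1 : ∀ j : (i : Fin p) → Fin (n i),
        (∑ d : (i : Fin p) → Sym (Fin (n i)) (m i + 1),
          (if (∀ i, d i = j i ::ₛ c i) then a i₀ j else 0) * u d)
        = a i₀ j * u (fun i => j i ::ₛ c i) := by
      intro j
      rw [Finset.sum_eq_single (fun i => j i ::ₛ c i)]
      · simp
      · intro d _ hd
        rw [if_neg, zero_mul]
        intro h
        exact hd (funext h)
      · simp
    simp only [Finset.sum_mul]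
    rw [Finset.sum_comm]
    simp only [step1]
    have step2 : ∀ j : (i : Fin p) → Fin (n i),
        a i₀ j * u (fun i => j i ::ₛ c i)
        = (∏ i, ((c i).1.map (v i)).prod) * (a i₀ j * ∏ i, v i (j i)) := by
      intro j
      rw [hu]
      simp only [Sym.val_eq_coe, Sym.coe_cons, Multiset.map_cons, Multiset.prod_cons,
        Finset.prod_mul_distrib]
      ring
    simp only [step2]
    rw [← Finset.mul_sum]
    exact mul_eq_zero_of_right _ (by convert hker i₀ using 2; congr!)
  refine ⟨hu0, hker', fun e => ?_⟩
  rw [← Matrix.exists_vecMul_eq_zero_iff]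
  refine ⟨u ∘ e, ?_, ?_⟩
  · intro h
    apply hu0
    funext d
    have := congrFun h (e.symm d)
    simpa using this
  · funext c
    have h0 := congrFun hker' c
    simp only [Matrix.mulVec, Matrix.transpose_apply, dotProduct,
      Pi.zero_apply] at h0
    simp only [Matrix.vecMul, dotProduct, Matrix.submatrix_apply,
      Function.comp_apply, id_eq, Pi.zero_apply]
    rw [Equiv.sum_comp e (fun d => u d * delM n m a d c)]
    simpa [mul_comm] using h0
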